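/- Delta-based wp for acyclicity under single-edge insertion: let Arc be a binary relation on U and let Arc' = Arc ∪ {(d,b)}. Define Δ(x,y) to hold iff TC'(x,y) holds via a path using the new edge (d,b), i.e., Δ is the least relation with Δ(d,b); Δ(d,y) whenever TC(b,y); and Δ(x,y) whenever Arc(x,z) ∧ Δ(z,y), where TC, TC' are the transitive closures of Arc, Arc' respectively. If TC is irreflexive (∀x, ¬TC(x,x)), then TC' is irreflexive if and only if Δ is irreflexive (∀x, ¬Δ(x,x)). -/

import Mathlib

/-- The delta relation for the insertion of the single edge `(d, b)` into `Arc`: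
the least relation with `Δ(d,b)`, `Δ(d,y)` whenever `TC(b,y)`, and `Δ(x,y)`
whenever `Arc(x,z) ∧ Δ(z,y)`. -/
inductive Delta {U : Type*} (Arc : U → U → Prop) (d b : U) : U → U → Prop where
  | base : Delta Arc d b d b
  | tc {y : U} : Relation.TransGen Arc b y → Delta Arc d b d y
  | step {x z y : U} : Arc x z → Delta Arc d b z y → Delta Arc d b x y

lemma delta_to_tc' {U : Type*} {Arc : U → U → Prop} {d b x y : U}
    (hΔ : Delta Arc d b x y) :
    Relation.TransGen (fun x y => Arc x y ∨ (x = d ∧ y = b)) x y := by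
  induction hΔ with
  | base => exact Relation.TransGen.single (Or.inr ⟨rfl, rfl⟩)
  | tc hby =>
      have h1 : Relation.TransGen (fun x y => Arc x y ∨ (x = d ∧ y = b)) d b :=
        Relation.TransGen.single (Or.inr ⟨rfl, rfl⟩)
      have h2 : Relation.TransGen (fun x y => Arc x y ∨ (x = d ∧ y = b)) b _ :=
        Relation.TransGen.mono (fun _ _ ha => Or.inl ha) _ _ hby
      exact h1.trans h2
  | step ha _ ih => exact Relation.TransGen.head (Or.inl ha) ih

lemma tc'_decomp {U : Type*} {Arc : U → U → Prop} {d b x y : U}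
    (hT : Relation.TransGen (fun x y => Arc x y ∨ (x = d ∧ y = b)) x y) :
    Relation.TransGen Arc x y ∨
      (Relation.ReflTransGen Arc x d ∧ Relation.ReflTransGen Arc b y) := by
  induction hT with
  | single h =>
      rcases h with h | ⟨rfl, rfl⟩
      · exact Or.inl (Relation.TransGen.single h)
      · exact Or.inr ⟨Relation.ReflTransGen.refl, Relation.ReflTransGen.refl⟩
  | tail _ h ih =>
      rcases h with h | ⟨rfl, rfl⟩
      · rcases ih with ih | ⟨h1, h2⟩
        · exact Or.inl (ih.tail h)
        · exact Or.inr ⟨h1, h2.tail h⟩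
      · rcases ih with ih | ⟨h1, _⟩
        · exact Or.inr ⟨ih.to_reflTransGen, Relation.ReflTransGen.refl⟩
        · exact Or.inr ⟨h1, Relation.ReflTransGen.refl⟩

/-- Delta-based wp for acyclicity under single-edge insertion: if the transitive
closure of `Arc` is irreflexive, then the transitive closure of `Arc ∪ {(d,b)}`
is irreflexive iff `Δ` is irreflexive. -/
theorem acyclicity_delta_wp {U : Type*} (d b : U) (Arc : U → U → Prop)
    (h : ∀ x, ¬ Relation.TransGen Arc x x) :
    (∀ x, ¬ Relation.TransGen (fun x y => Arc x y ∨ (x = d ∧ y = b)) x x) ↔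
      (∀ x, ¬ Delta Arc d b x x) := by
  constructor
  · intro hT x hΔ
    exact hT x (delta_to_tc' hΔ)
  · intro hΔ x hT
    rcases tc'_decomp hT with hc | ⟨h1, h2⟩
    · exact h x hc
    · have hbd : Relation.ReflTransGen Arc b d := h2.trans h1
      rcases (Relation.reflTransGen_iff_eq_or_transGen.mp hbd) with rfl | htc
      · exact hΔ d Delta.base
      · exact hΔ d (Delta.tc htc)
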